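/- Let C be a small well-founded category in which every morphism factors as a strong epimorphism followed by a monomorphism, let n ∈ ℕ, and let X be a strongly regular presheaf on C. If every sequence of n+1 composable morphisms in the full subcategory of the category of elements C/X determined by the minimal objects contains an isomorphism (i.e. IBD_n holds in D X), then dim X ≤ n. -/

import Mathlib

open CategoryTheory Opposite

universe w v u

namespace PaperEtendue

/-- An element `w` of a Heyting algebra is *widespread* if the lattice of elements
above `w` is complemented. -/
def Widespread {H : Type u} [HeytingAlgebra H] (w : H) : Prop :=
  ∀ v : H, w ≤ v → ∃ v' : H, w ≤ v' ∧ v ⊔ v' = ⊤ ∧ v ⊓ v' = w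

/-- An object is *minimal* if every morphism with that domain is a monomorphism. -/
def Minimal {C : Type u} [Category.{v} C] (c : C) : Prop :=
  ∀ ⦃d : C⦄ (f : c ⟶ d), Mono f

/-- An object is *preterminal* if there is at most one morphism into it from any object. -/
def Preterminal {C : Type u} [Category.{v} C] (c : C) : Prop :=
  ∀ ⦃b : C⦄ (u v : b ⟶ c), u = v

/-- The category of elements `C/X` of a presheaf `X`: objects are pairs `(x, D)`
with `x ∈ X(D)`. -/
structure Elem {C : Type u} [Category.{v} C] (X : Cᵒᵖ ⥤ Type w) : Type max u w where
  base : C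
  elt : X.obj (op base)

/-- Morphisms `(x, D) → (y, E)` in `C/X` are morphisms `f : D → E` of `C` with
`X(f)(y) = x`. -/
instance {C : Type u} [Category.{v} C] (X : Cᵒᵖ ⥤ Type w) : Category (Elem X) where
  Hom a b := {f : a.base ⟶ b.base // X.map f.op b.elt = a.elt}
  id a := ⟨𝟙 a.base, by simp⟩
  comp {a b c} f g := ⟨f.1 ≫ g.1, by
    rw [op_comp, FunctorToTypes.map_comp_apply, g.2, f.2]⟩
  id_comp f := Subtype.ext (Category.id_comp f.1)
  comp_id f := Subtype.ext (Category.comp_id f.1)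
  assoc f g h := Subtype.ext (Category.assoc f.1 g.1 h.1)

/-- A presheaf is *strongly regular* if for every monomorphism of `C/X`
with minimal codomain, the domain is also minimal. -/
def StronglyRegular {C : Type u} [Category.{v} C] (X : Cᵒᵖ ⥤ Type w) : Prop :=
  ∀ ⦃a b : Elem X⦄ (m : a ⟶ b), Mono m → Minimal b → Minimal a

/-- A presheaf is *non-singular* if every minimal object of `C/X` is preterminal. -/
def NonSingular {C : Type u} [Category.{v} C] (X : Cᵒᵖ ⥤ Type w) : Prop :=
  ∀ a : Elem X, Minimal a → Preterminal a

/-- Every morphism factors as a split epimorphism followed by a monomorphism. -/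
def SplitEpiMonoFact (C : Type u) [Category.{v} C] : Prop :=
  ∀ ⦃a b : C⦄ (f : a ⟶ b), ∃ (c : C) (e : a ⟶ c) (m : c ⟶ b),
    IsSplitEpi e ∧ Mono m ∧ e ≫ m = f

/-- Every morphism factors as a strong epimorphism followed by a monomorphism. -/
def StrongEpiMonoFact (C : Type u) [Category.{v} C] : Prop :=
  ∀ ⦃a b : C⦄ (f : a ⟶ b), ∃ (c : C) (e : a ⟶ c) (m : c ⟶ b),
    StrongEpi e ∧ Mono m ∧ e ≫ m = f

/-- The ascending chain condition: every `ℕ`-indexed chain of monomorphisms lying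
over a fixed object via compatible monomorphisms contains an isomorphism. -/
def AscendingChainCondition (C : Type u) [Category.{v} C] : Prop :=
  ∀ (obj : ℕ → C) (c : C) (m : ∀ k : ℕ, obj k ⟶ obj (k + 1)) (i : ∀ k : ℕ, obj k ⟶ c),
    (∀ k, Mono (m k)) → (∀ k, Mono (i k)) → (∀ k, m k ≫ i (k + 1) = i k) →
    ∃ t : ℕ, IsIso (m t)

/-- A category is *well-founded* if every `ℕ`-indexed chain of strong epimorphisms
is eventually constant. -/
def WellFoundedCat (C : Type u) [Category.{v} C] : Prop :=
  ∀ (obj : ℕ → C) (e : ∀ k : ℕ, obj k ⟶ obj (k + 1)),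
    (∀ k, StrongEpi (e k)) → ∃ k : ℕ, ∀ m : ℕ, k ≤ m → IsIso (e m)

/-- `𝔥 c ≤ n`: in every sequence of `n+1` composable monomorphisms ending at `c`,
at least one is an isomorphism. -/
def HeightLE {C : Type u} [Category.{v} C] (c : C) (n : ℕ) : Prop :=
  ∀ (obj : Fin (n + 2) → C) (f : ∀ i : Fin (n + 1), obj i.succ ⟶ obj i.castSucc),
    (∀ i, Mono (f i)) → obj 0 = c → ∃ i, IsIso (f i)

/-- Every sequence of `n+1` composable morphisms in `C` contains an isomorphism. -/
def ChainsContainIso (C : Type u) [Category.{v} C] (n : ℕ) : Prop :=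
  ∀ (obj : Fin (n + 2) → C) (f : ∀ i : Fin (n + 1), obj i.succ ⟶ obj i.castSucc),
    ∃ i, IsIso (f i)

/-- The full subcategory of `C/X` determined by the minimal objects. -/
abbrev MinimalElems {C : Type u} [Category.{v} C] (X : Cᵒᵖ ⥤ Type w) :=
  ObjectProperty.FullSubcategory (fun a : Elem X => Minimal a)

/-- A morphism factors through an object of height below `n`. -/
def FactorsThroughHeightLE {C : Type u} [Category.{v} C] {a b : C} (f : a ⟶ b) (n : ℕ) : Prop :=
  ∃ (c : C) (v : a ⟶ c) (u : c ⟶ b), HeightLE c n ∧ v ≫ u = f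

/-- `dim X ≤ n`: every element of `X` is the restriction of an element along a morphism
factoring through an object of height below `n` (i.e. `X` is `n`-skeletal). -/
def DimLE {C : Type u} [Category.{v} C] (X : Cᵒᵖ ⥤ Type w) (n : ℕ) : Prop :=
  ∀ (D : C) (x : X.obj (op D)), ∃ (E : C) (f : D ⟶ E) (y : X.obj (op E)),
    FactorsThroughHeightLE f n ∧ X.map f.op y = x

/-- A two-sided ideal of morphisms of a category. -/
def IsIdeal {C : Type u} [Category.{v} C] (I : MorphismProperty C) : Prop :=
  ∀ ⦃a b c d : C⦄ (h : a ⟶ b) (f : b ⟶ c) (g : c ⟶ d), I f → I (h ≫ f ≫ g)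

/-- An idempotent ideal: every member factors as a composite of two members. -/
def IsIdempotentIdeal {C : Type u} [Category.{v} C] (I : MorphismProperty C) : Prop :=
  IsIdeal I ∧ ∀ ⦃a b : C⦄ (f : a ⟶ b), I f →
    ∃ (c : C) (h : a ⟶ c) (g : c ⟶ b), I h ∧ I g ∧ h ≫ g = f

/-- The implication sieve `V ⇒ W`. -/
def sieveImp {C : Type u} [Category.{v} C] {D : C} (V W : Sieve D) : Sieve D where
  arrows F h := ∀ ⦃G : C⦄ (g : G ⟶ F), V.arrows (g ≫ h) → W.arrows (g ≫ h)
  downward_closed := by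
    intro F F' h hh g G' g' hv
    have := hh (g' ≫ g) (by simpa using hv)
    simpa using this

/-- `W` is a subpresheaf of `X` given as a family of subsets closed under the action. -/
def IsSubpresheaf {C : Type u} [Category.{v} C] (X : Cᵒᵖ ⥤ Type w)
    (W : ∀ D : Cᵒᵖ, Set (X.obj D)) : Prop :=
  ∀ ⦃D E : Cᵒᵖ⦄ (f : D ⟶ E) ⦃x : X.obj D⦄, x ∈ W D → X.map f x ∈ W E

/-- The implication subpresheaf `(V ⇒ W)(D)`. -/
def impSet {C : Type u} [Category.{v} C] (X : Cᵒᵖ ⥤ Type w)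
    (V W : ∀ D : Cᵒᵖ, Set (X.obj D)) (D : Cᵒᵖ) : Set (X.obj D) :=
  {x | ∀ ⦃E : Cᵒᵖ⦄ (f : D ⟶ E), X.map f x ∈ V E → X.map f x ∈ W E}

/-- `Ξ_k`: the image subpresheaf of the map `C(-, K) → X` corresponding to `k`. -/
def xiSet {C : Type u} [Category.{v} C] (X : Cᵒᵖ ⥤ Type w) {K : C} (k : X.obj (op K))
    (J : Cᵒᵖ) : Set (X.obj J) :=
  {j | ∃ g : op K ⟶ J, X.map g k = j}

section AuxForIbd

variable {C : Type u} [Category.{v} C] {X : Cᵒᵖ ⥤ Type w}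

lemma elemMono {a b : Elem X} (f : a ⟶ b) (h : Mono f.1) : Mono f := by
  constructor
  intro Z u v huv
  exact Subtype.ext (h.right_cancellation u.1 v.1 (congrArg Subtype.val huv))

lemma elemIsIsoBase {a b : Elem X} (f : a ⟶ b) (h : IsIso f) : IsIso f.1 := by
  obtain ⟨g, hg1, hg2⟩ := h
  exact ⟨g.1, congrArg Subtype.val hg1, congrArg Subtype.val hg2⟩

lemma existsMinimalElem (hwf : WellFoundedCat C) (hfact : StrongEpiMonoFact C)
    (a : Elem X) : ∃ (b : Elem X) (f : a ⟶ b), Minimal b := by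
  by_contra hcon
  push_neg at hcon
  have hstep : ∀ s : Σ c : Elem X, (a ⟶ c),
      ∃ (s' : Σ c : Elem X, (a ⟶ c)) (e : s.1 ⟶ s'.1), StrongEpi e.1 ∧ ¬ IsIso e.1 := by
    rintro ⟨c, g⟩
    have hnm : ¬ Minimal c := hcon c g
    simp only [Minimal, not_forall] at hnm
    obtain ⟨d, h, hnmono⟩ := hnm
    obtain ⟨mid, e, m, he, hm, hcom⟩ := hfact h.1
    have hz : X.map e.op (X.map m.op d.elt) = c.elt := by
      rw [← FunctorToTypes.map_comp_apply, ← op_comp, hcom, h.2]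
    refine ⟨⟨⟨mid, X.map m.op d.elt⟩, g ≫ ⟨e, hz⟩⟩, ⟨e, hz⟩, he, ?_⟩
    intro hiso
    apply hnmono
    apply elemMono h
    have : Mono h.1 := by
      rw [← hcom]
      haveI : IsIso e := hiso
      haveI : Mono m := hm
      exact mono_comp e m
    exact this
  choose next e hse hni using hstep
  let seq : ℕ → Σ c : Elem X, (a ⟶ c) := fun k => Nat.rec ⟨a, 𝟙 a⟩ (fun _ s => next s) k
  obtain ⟨k, hk⟩ := hwf (fun k => (seq k).1.base) (fun k => (e (seq k)).1) (fun k => hse (seq k))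
  exact hni (seq k) (hk k le_rfl)

end AuxForIbd

theorem ibd_implies_dim_le {C : Type u} [Category.{v} C]
    (hwf : WellFoundedCat C) (hfact : StrongEpiMonoFact C)
    (n : ℕ) (X : Cᵒᵖ ⥤ Type w) (hreg : StronglyRegular X)
    (hibd : ChainsContainIso (MinimalElems X) n) : DimLE X n := by
  intro D x
  obtain ⟨b, f, hmin⟩ := existsMinimalElem hwf hfact (⟨D, x⟩ : Elem X)
  obtain ⟨E, y⟩ := b
  refine ⟨E, f.1, y, ⟨E, f.1, 𝟙 E, ?_, Category.comp_id _⟩, f.2⟩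
  intro obj g hg hE
  subst hE
  let elts : ∀ i : Fin (n + 2), X.obj (op (obj i)) :=
    Fin.induction y (fun i h => X.map (g i).op h)
  have hsucc : ∀ i : Fin (n + 1), X.map (g i).op (elts i.castSucc) = elts i.succ :=
    fun i => (Fin.induction_succ _ _ i).symm
  let A : Fin (n + 2) → Elem X := fun i => ⟨obj i, elts i⟩
  let G : ∀ i : Fin (n + 1), A i.succ ⟶ A i.castSucc := fun i => ⟨g i, hsucc i⟩
  have hminA : ∀ i, Minimal (A i) := by
    intro i
    induction i using Fin.induction with
    | zero =>
        have h0 : elts 0 = y := Fin.induction_zero _ _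
        show Minimal (⟨obj 0, elts 0⟩ : Elem X)
        rw [h0]
        exact hmin
    | succ i ih => exact hreg (G i) (elemMono (G i) (hg i)) ih
  obtain ⟨i, hiso⟩ := hibd (fun i => ⟨A i, hminA i⟩) (fun i => ObjectProperty.homMk (G i))
  have hiso' : IsIso (G i) := by
    obtain ⟨inv, h1, h2⟩ := hiso
    exact ⟨inv.hom, congrArg (fun φ => φ.hom) h1, congrArg (fun φ => φ.hom) h2⟩
  exact ⟨i, elemIsIsoBase (G i) hiso'⟩

end PaperEtendue
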